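/- Let F be a finite field of odd prime order, W a finite-dimensional vector space over F, and φ : W → ℝ/ℤ a quadratic phase function (i.e., φ(x+h) = φ(x) + ∇φ(x)·h + (1/2)∇²φ h·h for a self-adjoint linear map ∇²φ). If the kernel of ∇²φ has codimension r in W (i.e., φ has rank r), then |𝔼_{x∈W} e(φ(x))| ≤ |F|^{-r/2}. -/

import Mathlib

open scoped BigOperators

/-- Gauss sum bound for quadratic phase functions of rank `r`. -/
theorem gauss_sum_bound {p : ℕ} (hp : p.Prime) (hodd : Odd p)
    (W : Type*) [AddCommGroup W] [Module (ZMod p) W] [Fintype W]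
    (φ : W → AddCircle (1 : ℝ))
    (hquad : ∀ x h₁ h₂ h₃ : W,
      φ (x + h₁ + h₂ + h₃) - φ (x + h₁ + h₂) - φ (x + h₂ + h₃) - φ (x + h₁ + h₃)
        + φ (x + h₁) + φ (x + h₂) + φ (x + h₃) - φ x = 0)
    (r : ℕ)
    (hrank : Nat.card {h : W // ∀ x k : W,
        φ (x + h + k) - φ (x + h) - φ (x + k) + φ x = 0} * p ^ r
      = Fintype.card W) :
    ‖(∑ x : W, (AddCircle.toCircle (φ x) : ℂ)) / (Fintype.card W : ℂ)‖
      ≤ (p : ℝ) ^ (-(r : ℝ) / 2) := by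
  classical
  set e : AddCircle (1:ℝ) → ℂ := fun a => (AddCircle.toCircle a : ℂ) with he
  have e_add : ∀ a b : AddCircle (1:ℝ), e (a + b) = e a * e b := by
    intro a b
    simp only [he, AddCircle.toCircle_add]
    push_cast
    ring
  have e_zero : e (0 : AddCircle (1:ℝ)) = 1 := by
    simp [he, AddCircle.toCircle_zero]
  have e_norm : ∀ a : AddCircle (1:ℝ), ‖e a‖ = 1 := by
    intro a
    simp [he, Circle.norm_coe]
  have e_conj : ∀ a : AddCircle (1:ℝ), (starRingEnd ℂ) (e a) = e (-a) := by
    intro a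
    simp only [he]
    rw [← Circle.coe_inv_eq_conj]
    congr 1
    exact (eq_inv_of_mul_eq_one_left (a := AddCircle.toCircle (-a))
      (by rw [← AddCircle.toCircle_add]; simp)).symm
  have e_ne : ∀ a : AddCircle (1:ℝ), a ≠ 0 → e a ≠ 1 := by
    intro a ha hc
    apply ha
    apply AddCircle.injective_toCircle (one_ne_zero)
    rw [AddCircle.toCircle_zero]
    exact Subtype.ext (by simpa [he] using hc)
  set B : W → W → AddCircle (1:ℝ) := fun h k => φ (h + k) - φ h - φ k + φ 0 with hBdef
  have hB_x : ∀ x h k : W, φ (x + h + k) - φ (x + h) - φ (x + k) + φ x = B h k := by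
    intro x h k
    have h3 := hquad 0 h k x
    simp only [zero_add] at h3
    rw [show x + h + k = h + k + x from by abel, show x + h = h + x from by abel,
      show x + k = k + x from by abel]
    simp only [hBdef]
    rw [← sub_eq_zero, ← h3]
    abel
  have hB_add : ∀ h k₁ k₂ : W, B h (k₁ + k₂) = B h k₁ + B h k₂ := by
    intro h k₁ k₂
    have h3 := hquad 0 h k₁ k₂
    simp only [zero_add] at h3
    simp only [hBdef]
    rw [show h + (k₁ + k₂) = h + k₁ + k₂ from by abel]
    rw [← sub_eq_zero, ← h3]
    abel
  set S : ℂ := ∑ x : W, e (φ x) with hS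
  have hsum : ∀ h : W, (¬ ∀ k, B h k = 0) → ∑ y : W, e (B h y) = 0 := by
    intro h hne
    push_neg at hne
    obtain ⟨k₀, hk₀⟩ := hne
    have h1 : ∑ y : W, e (B h y) = e (B h k₀) * ∑ y : W, e (B h y) := by
      rw [Finset.mul_sum]
      rw [← Equiv.sum_comp (Equiv.addLeft k₀) (fun y => e (B h y))]
      apply Finset.sum_congr rfl
      intro y _
      simp only [Equiv.coe_addLeft]
      rw [hB_add, e_add]
    have h2 : (e (B h k₀) - 1) * (∑ y : W, e (B h y)) = 0 := by
      rw [sub_mul, one_mul, ← h1, sub_self]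
    rcases mul_eq_zero.mp h2 with hc | hc
    · exact absurd (sub_eq_zero.mp hc) (e_ne _ hk₀)
    · exact hc
  have key : S * (starRingEnd ℂ) S = ∑ h : W, e (φ h - φ 0) * ∑ y : W, e (B h y) := by
    have step1 : S * (starRingEnd ℂ) S = ∑ y : W, ∑ h : W, e (φ h - φ 0) * e (B h y) := by
      rw [hS, map_sum, Finset.sum_mul_sum, Finset.sum_comm]
      apply Finset.sum_congr rfl
      intro y _
      rw [← Equiv.sum_comp (Equiv.addRight y) (fun x => e (φ x) * (starRingEnd ℂ) (e (φ y)))]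
      apply Finset.sum_congr rfl
      intro h _
      simp only [Equiv.coe_addRight]
      rw [e_conj, ← e_add, ← e_add]
      congr 1
      simp only [hBdef]
      abel
    rw [step1, Finset.sum_comm]
    exact Finset.sum_congr rfl fun h _ => (Finset.mul_sum _ _ _).symm
  have hcount : ∀ h : W, ‖∑ y : W, e (B h y)‖ =
      if (∀ k, B h k = 0) then (Fintype.card W : ℝ) else 0 := by
    intro h
    by_cases hh : ∀ k, B h k = 0
    · rw [if_pos hh]
      have : ∀ y ∈ Finset.univ, e (B h y) = 1 := fun y _ => by rw [hh y, e_zero]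
      rw [Finset.sum_congr rfl this]
      simp
    · rw [if_neg hh, hsum h hh, norm_zero]
  have hbound : ‖S‖^2 ≤
      ((Finset.univ.filter (fun h : W => ∀ k, B h k = 0)).card : ℝ) * (Fintype.card W : ℝ) := by
    have h0 : ‖S‖^2 = ‖S * (starRingEnd ℂ) S‖ := by
      rw [norm_mul, RCLike.norm_conj, sq]
    rw [h0, key]
    calc ‖∑ h : W, e (φ h - φ 0) * ∑ y : W, e (B h y)‖
        ≤ ∑ h : W, ‖e (φ h - φ 0) * ∑ y : W, e (B h y)‖ := norm_sum_le _ _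
      _ = ∑ h : W, ‖∑ y : W, e (B h y)‖ := by
          apply Finset.sum_congr rfl
          intro h _
          rw [norm_mul, e_norm, one_mul]
      _ = ∑ h : W, (if (∀ k, B h k = 0) then (Fintype.card W : ℝ) else 0) := by
          exact Finset.sum_congr rfl fun h _ => hcount h
      _ = ∑ h ∈ Finset.univ.filter (fun h : W => ∀ k, B h k = 0), (Fintype.card W : ℝ) :=
          (Finset.sum_filter _ _).symm
      _ = ((Finset.univ.filter (fun h : W => ∀ k, B h k = 0)).card : ℝ) * (Fintype.card W : ℝ) := by
          rw [Finset.sum_const, nsmul_eq_mul]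
  have hcard : (Finset.univ.filter (fun h : W => ∀ k, B h k = 0)).card =
      Nat.card {h : W // ∀ x k : W,
        φ (x + h + k) - φ (x + h) - φ (x + k) + φ x = 0} := by
    rw [Nat.card_eq_fintype_card, Fintype.card_subtype]
    congr 1
    apply Finset.filter_congr
    intro h _
    constructor
    · intro hh x k
      rw [hB_x]
      exact hh k
    · intro hh k
      rw [← hB_x 0 h k]
      exact hh 0 k
  set K : ℕ := Nat.card {h : W // ∀ x k : W,
    φ (x + h + k) - φ (x + h) - φ (x + k) + φ x = 0} with hKdef
  have hNpos : 0 < Fintype.card W := Fintype.card_pos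
  have hKpos : 0 < K := by
    rcases Nat.eq_zero_or_pos K with h | h
    · rw [h, zero_mul] at hrank
      omega
    · exact h
  have hppos : (0:ℝ) < (p:ℝ) := by exact_mod_cast hp.pos
  have hNK : (Fintype.card W : ℝ) = (K : ℝ) * (p:ℝ)^r := by exact_mod_cast hrank.symm
  have hrpow_pos : (0:ℝ) < (p:ℝ) ^ (-(r:ℝ)/2) := Real.rpow_pos_of_pos hppos _
  have hnorm_div : ‖S / (Fintype.card W : ℂ)‖ = ‖S‖ / (Fintype.card W : ℝ) := by
    rw [norm_div]
    congr 1
    simp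
  rw [hnorm_div]
  have hsq : (‖S‖ / (Fintype.card W : ℝ))^2 ≤ ((p:ℝ) ^ (-(r:ℝ)/2))^2 := by
    have hc2 : ((p:ℝ) ^ (-(r:ℝ)/2))^2 = ((p:ℝ)^r)⁻¹ := by
      rw [← Real.rpow_natCast ((p:ℝ) ^ (-(r:ℝ)/2)) 2, ← Real.rpow_mul hppos.le]
      norm_num
    rw [hc2, div_pow]
    rw [div_le_iff₀ (by positivity)]
    have hKR : (0:ℝ) < (K:ℝ) := by exact_mod_cast hKpos
    have hprR : (0:ℝ) < (p:ℝ)^r := by positivity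
    calc ‖S‖^2 ≤ (K : ℝ) * (Fintype.card W : ℝ) := by rw [hcard] at hbound; exact hbound
      _ = ((p:ℝ)^r)⁻¹ * ((Fintype.card W : ℝ))^2 := by
          rw [hNK]; field_simp
  calc ‖S‖ / (Fintype.card W : ℝ)
      = Real.sqrt ((‖S‖ / (Fintype.card W : ℝ))^2) := by
        rw [Real.sqrt_sq (by positivity)]
    _ ≤ Real.sqrt (((p:ℝ) ^ (-(r:ℝ)/2))^2) := Real.sqrt_le_sqrt hsq
    _ = (p:ℝ) ^ (-(r:ℝ)/2) := Real.sqrt_sq hrpow_pos.le
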